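/- Fix an integer N ≥ 6 and a real c ∈ (0,1). Then the function f(x) = x² - c·(N·(e^x - 1 - x) - ((N-2)/2)·x·(e^x - 1)) satisfies f(x) > 0 for all x > 0. -/

import Mathlib

open Real

lemma aux_nonneg_of_deriv (F F' : ℝ → ℝ) (hF : ∀ x, HasDerivAt F (F' x) x)
    (h0 : F 0 = 0) (hpos : ∀ x, 0 ≤ x → 0 ≤ F' x) :
    ∀ x, 0 ≤ x → 0 ≤ F x := by
  intro x hx
  have hc : Continuous F := continuous_iff_continuousAt.2 fun y => (hF y).continuousAt
  have hmono : MonotoneOn F (Set.Ici (0:ℝ)) := by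
    apply monotoneOn_of_deriv_nonneg (convex_Ici 0) hc.continuousOn
    · intro y _
      exact (hF y).differentiableAt.differentiableWithinAt
    · intro y hy
      rw [(hF y).deriv]
      refine hpos y ?_
      rw [interior_Ici] at hy
      exact le_of_lt hy
  have := hmono Set.self_mem_Ici (Set.mem_Ici.2 hx) hx
  linarith [h0 ▸ this]

theorem pohozaev_f_pos_high_dim (N : ℕ) (hN : 6 ≤ N)
    (c : ℝ) (hc0 : 0 < c) (hc1 : c < 1)
    (f : ℝ → ℝ)
    (hf : ∀ x : ℝ, f x =
      x ^ 2 - c * ((N : ℝ) * (exp x - 1 - x) - (((N : ℝ) - 2) / 2) * x * (exp x - 1))) :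
    ∀ x : ℝ, 0 < x → 0 < f x := by
  set a : ℝ := (N : ℝ) with ha
  have haN : (6:ℝ) ≤ a := by rw [ha]; exact_mod_cast hN
  -- the function h and its first three derivatives
  set h0 : ℝ → ℝ := fun x => x ^ 2 - (a * (exp x - 1 - x) - ((a - 2) / 2) * x * (exp x - 1)) with hh0
  set h1 : ℝ → ℝ := fun x => 2 * x - (a * (exp x - 1) - ((a - 2) / 2) * ((exp x - 1) + x * exp x)) with hh1
  set h2 : ℝ → ℝ := fun x => 2 - 2 * exp x + ((a - 2) / 2) * (x * exp x) with hh2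
  set h3 : ℝ → ℝ := fun x => exp x * ((a - 6) / 2 + ((a - 2) / 2) * x) with hh3
  have d2 : ∀ x : ℝ, HasDerivAt h2 (h3 x) x := by
    intro x
    have hx := Real.hasDerivAt_exp x
    have := ((hasDerivAt_const x (2:ℝ)).sub (hx.const_mul 2)).add
      (((hasDerivAt_id x).mul hx).const_mul ((a - 2) / 2))
    refine this.congr_deriv ?_
    simp [hh3]
    ring
  have d1 : ∀ x : ℝ, HasDerivAt h1 (h2 x) x := by
    intro x
    have hx := Real.hasDerivAt_exp x
    have := ((hasDerivAt_id x).const_mul 2).sub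
      (((hx.sub_const 1).const_mul a).sub
        (((hx.sub_const 1).add ((hasDerivAt_id x).mul hx)).const_mul ((a - 2) / 2)))
    refine this.congr_deriv ?_
    simp [hh2]
    ring
  have d0 : ∀ x : ℝ, HasDerivAt h0 (h1 x) x := by
    intro x
    have hx := Real.hasDerivAt_exp x
    have := (hasDerivAt_pow 2 x).sub
      ((((hx.sub_const 1).sub (hasDerivAt_id x)).const_mul a).sub
        (((hasDerivAt_id x).const_mul ((a - 2) / 2)).mul (hx.sub_const 1)))
    refine this.congr_deriv ?_
    simp [hh1]
    ring
  have p3 : ∀ x : ℝ, 0 ≤ x → 0 ≤ h3 x := by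
    intro x hx
    have : (0:ℝ) ≤ (a - 6) / 2 + ((a - 2) / 2) * x := by
      have : 0 ≤ ((a - 2) / 2) * x := mul_nonneg (by linarith) hx
      linarith
    exact mul_nonneg (exp_pos x).le this
  have p2 : ∀ x : ℝ, 0 ≤ x → 0 ≤ h2 x :=
    aux_nonneg_of_deriv h2 h3 d2 (by simp [hh2]) p3
  have p1 : ∀ x : ℝ, 0 ≤ x → 0 ≤ h1 x :=
    aux_nonneg_of_deriv h1 h2 d1 (by simp [hh1]) p2
  have p0 : ∀ x : ℝ, 0 ≤ x → 0 ≤ h0 x :=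
    aux_nonneg_of_deriv h0 h1 d0 (by simp [hh0]) p1
  intro x hx
  have key := p0 x hx.le
  rw [hf x]
  simp only [hh0] at key
  nlinarith [mul_pos hx hx, sq_nonneg x]
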